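/- With Φ and S related by Σ_{n≠0} (Φ_n/|n|) t^n = log(1 + Σ_{n≠0} S_n t^n), exponentiating gives S_n = Σ_{I ⊨ n} (1/sp(I)) Φ^I, where for I = (i_1,...,i_m), sp(I) = m! · |i_1|·|i_2|···|i_m| and Φ^I = Φ_{i_1}···Φ_{i_m}. -/

import Mathlib

namespace SPhiAux

def compsAux : ℕ → ℕ → Finset (List ℕ)
  | _, 0 => {[]}
  | 0, _ + 1 => ∅
  | f + 1, N + 1 =>
    (Finset.range (N + 1)).biUnion fun a => (compsAux f (N - a)).image ((a + 1) :: ·)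

def comps (N : ℕ) : Finset (List ℕ) := compsAux N N

private theorem nil_iff {L : List ℕ} : L = [] ↔ (∀ x ∈ L, 0 < x) ∧ L.sum = 0 := by
  constructor
  · rintro rfl; simp
  · rintro ⟨h1, h2⟩
    cases L with
    | nil => rfl
    | cons b T => have := h1 b (by simp); simp only [List.sum_cons] at h2; omega

theorem mem_compsAux {f N : ℕ} (hf : N ≤ f) {L : List ℕ} :
    L ∈ compsAux f N ↔ (∀ x ∈ L, 0 < x) ∧ L.sum = N := by
  induction f generalizing N L with
  | zero =>
    interval_cases N
    simpa [compsAux] using nil_iff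
  | succ f ih =>
    match N with
    | 0 => simpa [compsAux] using nil_iff
    | N + 1 =>
      simp only [compsAux, Finset.mem_biUnion, Finset.mem_range, Finset.mem_image]
      constructor
      · rintro ⟨a, ha, T, hT, rfl⟩
        rw [ih (by omega)] at hT
        refine ⟨?_, ?_⟩
        · intro x hx
          rcases List.mem_cons.1 hx with rfl | hx
          · omega
          · exact hT.1 x hx
        · simp only [List.sum_cons, hT.2]; omega
      · rintro ⟨hpos, hsum⟩
        match L with
        | [] => simp at hsum
        | b :: T =>
          have hb : 0 < b := hpos b (by simp)
          simp only [List.sum_cons] at hsum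
          refine ⟨b - 1, by omega, T, ?_, ?_⟩
          · rw [ih (by omega)]
            exact ⟨fun x hx => hpos x (by simp [hx]), by omega⟩
          · congr 1
            omega

theorem mem_comps {N : ℕ} {L : List ℕ} :
    L ∈ comps N ↔ (∀ x ∈ L, 0 < x) ∧ L.sum = N := mem_compsAux le_rfl

theorem comps_zero : comps 0 = {[]} := rfl

theorem comps_one : comps 1 = {[1]} := by
  ext L
  rw [mem_comps, Finset.mem_singleton]
  constructor
  · rintro ⟨h1, h2⟩
    match L with
    | [] => simp at h2
    | [a] => simp only [List.sum_cons, List.sum_nil, add_zero] at h2; simp [h2]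
    | a :: b :: T =>
      have ha := h1 a (by simp)
      have hb := h1 b (by simp)
      simp only [List.sum_cons] at h2
      omega
  · rintro rfl
    refine ⟨?_, by simp⟩
    intro x hx
    simp only [List.mem_singleton] at hx
    omega

/-- the `log(1+x)` coefficient. -/
def ell (a : ℕ) : ℚ := (-1) ^ (a + 1) / a

/-- the weight of a composition in `exp (log (1+x))`. -/
def w (L : List ℕ) : ℚ := ((L.length.factorial : ℚ))⁻¹ * (L.map ell).prod

/-- the coefficient of `x^N` in `exp (log (1+x))`. -/
def e (N : ℕ) : ℚ := ∑ L ∈ comps N, w L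

theorem e_zero : e 0 = 1 := by simp [e, comps_zero, w]

theorem e_one : e 1 = 1 := by simp [e, comps_one, w, ell]

def T3 (N : ℕ) : Finset (List ℕ × ℕ × List ℕ) :=
  (((Finset.Iic N).biUnion comps ×ˢ Finset.Icc 1 N ×ˢ (Finset.Iic N).biUnion comps)).filter
    fun x => x.1.sum + x.2.1 + x.2.2.sum = N

theorem mem_T3 {N : ℕ} {x : List ℕ × ℕ × List ℕ} :
    x ∈ T3 N ↔ (∀ y ∈ x.1, 0 < y) ∧ (∀ y ∈ x.2.2, 0 < y) ∧ 1 ≤ x.2.1 ∧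
      x.1.sum + x.2.1 + x.2.2.sum = N := by
  obtain ⟨P, a, T⟩ := x
  simp only [T3, Finset.mem_filter, Finset.mem_product, Finset.mem_biUnion, Finset.mem_Iic,
    Finset.mem_Icc, mem_comps]
  constructor
  · rintro ⟨⟨⟨s1, hs1, hP1, hP2⟩, ⟨ha1, ha2⟩, ⟨s2, hs2, hT1, hT2⟩⟩, hsum⟩
    exact ⟨hP1, hT1, ha1, hsum⟩
  · rintro ⟨hP, hT, ha, hsum⟩
    exact ⟨⟨⟨P.sum, by omega, hP, rfl⟩, ⟨ha, by omega⟩, ⟨T.sum, by omega, hT, rfl⟩⟩, hsum⟩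

def F (x : List ℕ × ℕ × List ℕ) : ℚ :=
  (-1) ^ (x.2.1 + 1) * (((x.1.length + x.2.2.length + 1).factorial : ℚ))⁻¹
    * (x.1.map ell).prod * (x.2.2.map ell).prod

theorem sum_getD (L : List ℕ) : ∑ j ∈ Finset.range L.length, L.getD j 0 = L.sum := by
  induction L with
  | nil => simp
  | cons b T ih =>
    rw [List.length_cons, Finset.sum_range_succ']
    simp only [List.getD_cons_succ, List.getD_cons_zero]
    rw [ih, List.sum_cons]
    omega

theorem lhs_eq (N : ℕ) : (N : ℚ) * e N = ∑ x ∈ T3 N, F x := by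
  rw [e, Finset.mul_sum]
  have h1 : ∀ L ∈ comps N, (N : ℚ) * w L =
      ∑ j ∈ Finset.range L.length, (L.getD j 0 : ℚ) * w L := by
    intro L hL
    rw [← Finset.sum_mul]
    congr 1
    rw [← (mem_comps.1 hL).2, ← sum_getD L]
    push_cast
    rfl
  rw [Finset.sum_congr rfl h1,
    ← Finset.sum_sigma (comps N) (fun L => Finset.range L.length)
      (fun x => ((x.1.getD x.2 0 : ℕ) : ℚ) * w x.1)]
  refine Finset.sum_nbij'
    (i := fun x => (x.1.take x.2, x.1.getD x.2 0, x.1.drop (x.2 + 1)))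
    (j := fun y => ⟨y.1 ++ y.2.1 :: y.2.2, y.1.length⟩) ?_ ?_ ?_ ?_ ?_
  · rintro ⟨L, j⟩ hx
    dsimp only
    simp only [Finset.mem_sigma, Finset.mem_range] at hx
    obtain ⟨hL, hj⟩ := hx
    obtain ⟨hpos, hsum⟩ := mem_comps.1 hL
    rw [mem_T3]
    dsimp only
    have hget : L.getD j 0 = L[j] := List.getD_eq_getElem L 0 hj
    refine ⟨fun y hy => hpos y ((List.take_sublist _ _).mem hy),
      fun y hy => hpos y ((List.drop_sublist _ _).mem hy),
      by rw [hget]; exact hpos _ (List.getElem_mem hj), ?_⟩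
    have hdec : L.take j ++ L.getD j 0 :: L.drop (j + 1) = L := by
      rw [hget, ← List.drop_eq_getElem_cons hj, List.take_append_drop]
    calc (L.take j).sum + L.getD j 0 + (L.drop (j + 1)).sum
        = (L.take j ++ L.getD j 0 :: L.drop (j + 1)).sum := by
          simp [List.sum_append, List.sum_cons]; ring
      _ = N := by rw [hdec, hsum]
  · rintro ⟨P, a, T⟩ hy
    dsimp only
    rw [mem_T3] at hy
    dsimp only at hy
    obtain ⟨hP, hT, ha, hsum⟩ := hy
    simp only [Finset.mem_sigma, Finset.mem_range, mem_comps]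
    refine ⟨⟨?_, ?_⟩, ?_⟩
    · intro x hx
      rcases List.mem_append.1 hx with h | h
      · exact hP x h
      · rcases List.mem_cons.1 h with rfl | h
        · omega
        · exact hT x h
    · simp only [List.sum_append, List.sum_cons]; omega
    · simp only [List.length_append, List.length_cons]; omega
  · rintro ⟨L, j⟩ hx
    dsimp only
    simp only [Finset.mem_sigma, Finset.mem_range] at hx
    obtain ⟨hL, hj⟩ := hx
    have hget : L.getD j 0 = L[j] := List.getD_eq_getElem L 0 hj
    have hdec : L.take j ++ L.getD j 0 :: L.drop (j + 1) = L := by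
      rw [hget, ← List.drop_eq_getElem_cons hj, List.take_append_drop]
    have hlen : (L.take j).length = j := by
      rw [List.length_take]; omega
    rw [hlen, hdec]
  · rintro ⟨P, a, T⟩ hy
    dsimp only
    have h1 : (P ++ a :: T).take P.length = P := List.take_left
    have h2 : (P ++ a :: T).getD P.length 0 = a := by
      have hlt : P.length < (P ++ a :: T).length := by
        simp [List.length_append]
      rw [List.getD_eq_getElem _ 0 hlt, List.getElem_append_right le_rfl]
      simp
    have h3 : (P ++ a :: T).drop (P.length + 1) = T := by
      have : P ++ a :: T = (P ++ [a]) ++ T := by simp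
      rw [this]
      have hl : (P ++ [a]).length = P.length + 1 := by simp
      rw [← hl, List.drop_left]
    simp only [h1, h2, h3]
  · rintro ⟨L, j⟩ hx
    dsimp only
    simp only [Finset.mem_sigma, Finset.mem_range] at hx
    obtain ⟨hL, hj⟩ := hx
    obtain ⟨hpos, _⟩ := mem_comps.1 hL
    have hget : L.getD j 0 = L[j] := List.getD_eq_getElem L 0 hj
    have hdec : L.take j ++ L.getD j 0 :: L.drop (j + 1) = L := by
      rw [hget, ← List.drop_eq_getElem_cons hj, List.take_append_drop]
    have hlen : (L.take j).length = j := by rw [List.length_take]; omega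
    have hlenL : L.length = j + (L.drop (j + 1)).length + 1 := by
      conv_lhs => rw [← hdec]
      simp [List.length_append, hlen]
      omega
    have hprod : (L.map ell).prod =
        ((L.take j).map ell).prod * ell (L.getD j 0) * ((L.drop (j + 1)).map ell).prod := by
      conv_lhs => rw [← hdec]
      simp [List.map_append, List.prod_append]
      ring
    have hapos : 0 < L.getD j 0 := by
      rw [hget]; exact hpos _ (List.getElem_mem hj)
    have hcancel : (L.getD j 0 : ℚ) * ell (L.getD j 0) = (-1) ^ (L.getD j 0 + 1) := by
      have hne : (L.getD j 0 : ℚ) ≠ 0 := Nat.cast_ne_zero.2 (by omega)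
      rw [show ell (L.getD j 0) = (-1) ^ (L.getD j 0 + 1) / (L.getD j 0 : ℚ) from rfl]
      rw [← mul_div_assoc, mul_comm, mul_div_assoc, div_self hne, mul_one]
    calc (L.getD j 0 : ℚ) * w L
        = ((L.getD j 0 : ℚ) * ell (L.getD j 0)) *
          ((((j + (L.drop (j + 1)).length + 1).factorial : ℚ))⁻¹ *
            ((L.take j).map ell).prod * ((L.drop (j + 1)).map ell).prod) := by
          rw [w, hprod, hlenL]; ring
      _ = F (L.take j, L.getD j 0, L.drop (j + 1)) := by
          rw [hcancel, F]; dsimp only; rw [hlen]; ring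

theorem rhs_eq (N : ℕ) :
    ∑ a ∈ Finset.Icc 1 N, (-1 : ℚ) ^ (a + 1) * e (N - a) = ∑ x ∈ T3 N, F x := by
  have h1 : ∀ a : ℕ, (-1 : ℚ) ^ (a + 1) * e (N - a) =
      ∑ T' ∈ comps (N - a), ∑ p ∈ Finset.range (T'.length + 1),
        (-1 : ℚ) ^ (a + 1) * (((T'.length + 1).factorial : ℚ))⁻¹ * (T'.map ell).prod := by
    intro a
    rw [e, Finset.mul_sum]
    refine Finset.sum_congr rfl fun T' _ => ?_
    rw [Finset.sum_const, Finset.card_range, nsmul_eq_mul, w]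
    have hfac : ((T'.length + 1).factorial : ℚ) = (T'.length + 1) * (T'.length.factorial : ℚ) := by
      rw [Nat.factorial_succ]; push_cast; ring
    have hne1 : ((T'.length : ℚ) + 1) ≠ 0 := by positivity
    have hne2 : (T'.length.factorial : ℚ) ≠ 0 := by
      exact_mod_cast T'.length.factorial_ne_zero
    rw [hfac]
    push_cast
    field_simp
  rw [Finset.sum_congr rfl fun a _ => h1 a]
  rw [show (∑ a ∈ Finset.Icc 1 N, ∑ T' ∈ comps (N - a), ∑ p ∈ Finset.range (T'.length + 1),
        (-1 : ℚ) ^ (a + 1) * (((T'.length + 1).factorial : ℚ))⁻¹ * (T'.map ell).prod)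
      = ∑ a ∈ Finset.Icc 1 N, ∑ y ∈ (comps (N - a)).sigma (fun T' => Finset.range (T'.length + 1)),
        (-1 : ℚ) ^ (a + 1) * (((y.1.length + 1).factorial : ℚ))⁻¹ * (y.1.map ell).prod
      from Finset.sum_congr rfl fun a _ =>
        (Finset.sum_sigma (comps (N - a)) (fun T' => Finset.range (T'.length + 1))
          (fun y => (-1 : ℚ) ^ (a + 1) * (((y.1.length + 1).factorial : ℚ))⁻¹
            * (y.1.map ell).prod)).symm]
  rw [← Finset.sum_sigma (Finset.Icc 1 N)
      (fun a => (comps (N - a)).sigma (fun T' => Finset.range (T'.length + 1)))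
      (fun x => (-1 : ℚ) ^ (x.1 + 1) * (((x.2.1.length + 1).factorial : ℚ))⁻¹
        * (x.2.1.map ell).prod)]
  refine Finset.sum_nbij'
    (i := fun x => (x.2.1.take x.2.2, x.1, x.2.1.drop x.2.2))
    (j := fun y => ⟨y.2.1, ⟨y.1 ++ y.2.2, y.1.length⟩⟩) ?_ ?_ ?_ ?_ ?_
  · rintro ⟨a, R, p⟩ hx
    dsimp only
    simp only [Finset.mem_sigma, Finset.mem_range, Finset.mem_Icc, mem_comps] at hx
    obtain ⟨⟨ha1, ha2⟩, ⟨hpos, hsum⟩, hp⟩ := hx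
    rw [mem_T3]
    dsimp only
    refine ⟨fun y hy => hpos y ((List.take_sublist _ _).mem hy),
      fun y hy => hpos y ((List.drop_sublist _ _).mem hy), ha1, ?_⟩
    have : (R.take p).sum + (R.drop p).sum = R.sum := by
      rw [← List.sum_append, List.take_append_drop]
    omega
  · rintro ⟨P, a, T⟩ hy
    dsimp only
    rw [mem_T3] at hy
    dsimp only at hy
    obtain ⟨hP, hT, ha, hsum⟩ := hy
    simp only [Finset.mem_sigma, Finset.mem_range, Finset.mem_Icc, mem_comps]
    refine ⟨⟨ha, by omega⟩, ⟨?_, ?_⟩, ?_⟩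
    · intro x hx
      rcases List.mem_append.1 hx with h | h
      · exact hP x h
      · exact hT x h
    · rw [List.sum_append]; omega
    · rw [List.length_append]; omega
  · rintro ⟨a, R, p⟩ hx
    dsimp only
    simp only [Finset.mem_sigma, Finset.mem_range, Finset.mem_Icc, mem_comps] at hx
    obtain ⟨⟨ha1, ha2⟩, ⟨hpos, hsum⟩, hp⟩ := hx
    have h1 : R.take p ++ R.drop p = R := List.take_append_drop p R
    have h2 : (R.take p).length = p := by rw [List.length_take]; omega
    rw [h2, h1]
  · rintro ⟨P, a, T⟩ hy
    dsimp only
    have h1 : (P ++ T).take P.length = P := List.take_left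
    have h2 : (P ++ T).drop P.length = T := List.drop_left
    rw [h1, h2]
  · rintro ⟨a, R, p⟩ hx
    dsimp only
    simp only [Finset.mem_sigma, Finset.mem_range, Finset.mem_Icc, mem_comps] at hx
    obtain ⟨⟨ha1, ha2⟩, ⟨hpos, hsum⟩, hp⟩ := hx
    have h1 : R.take p ++ R.drop p = R := List.take_append_drop p R
    have hlen : R.length = (R.take p).length + (R.drop p).length := by
      conv_lhs => rw [← h1]
      rw [List.length_append]
    have hprod : (R.map ell).prod = ((R.take p).map ell).prod * ((R.drop p).map ell).prod := by
      conv_lhs => rw [← h1]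
      rw [List.map_append, List.prod_append]
    rw [F]
    dsimp only
    rw [hprod, hlen]
    ring

theorem e_rec (N : ℕ) : (N : ℚ) * e N = ∑ a ∈ Finset.Icc 1 N, (-1 : ℚ) ^ (a + 1) * e (N - a) :=
  (lhs_eq N).trans (rhs_eq N).symm

theorem e_eq_zero : ∀ N : ℕ, 2 ≤ N → e N = 0 := by
  intro N
  induction N using Nat.strong_induction_on with
  | _ N ih =>
    intro hN
    have key := e_rec N
    have hsub : ({N - 1, N} : Finset ℕ) ⊆ Finset.Icc 1 N := by
      intro a ha
      simp only [Finset.mem_insert, Finset.mem_singleton] at ha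
      rw [Finset.mem_Icc]
      omega
    have hvan : ∀ a ∈ Finset.Icc 1 N, a ∉ ({N - 1, N} : Finset ℕ) →
        (-1 : ℚ) ^ (a + 1) * e (N - a) = 0 := by
      intro a ha hnot
      rw [Finset.mem_Icc] at ha
      simp only [Finset.mem_insert, Finset.mem_singleton] at hnot
      push_neg at hnot
      have h2 : 2 ≤ N - a := by omega
      have h3 : N - a < N := by omega
      rw [ih (N - a) h3 h2, mul_zero]
    rw [← Finset.sum_subset hsub hvan] at key
    have hne : N - 1 ≠ N := by omega
    rw [Finset.sum_pair hne] at key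
    have e1 : N - (N - 1) = 1 := by omega
    have e2 : N - N = 0 := by omega
    have e3 : N - 1 + 1 = N := by omega
    rw [e1, e2, e3, e_one, e_zero] at key
    have : (-1 : ℚ) ^ N * 1 + (-1) ^ (N + 1) * 1 = 0 := by
      rw [pow_succ]; ring
    rw [this] at key
    have hNne : (N : ℚ) ≠ 0 := by
      have : N ≠ 0 := by omega
      exact_mod_cast this
    exact (mul_eq_zero.1 key).resolve_left hNne

end SPhiAux


/-- `I` is a vector composition of `n ∈ ℕ^l`: a list of nonzero vectors in
`ℕ^l` summing to `n`. -/
def IsVComp {l : ℕ} (n : Fin l → ℕ) (I : List (Fin l → ℕ)) : Prop :=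
  (∀ v ∈ I, v ≠ 0) ∧ I.sum = n



namespace SPhiAux

/-- chop a list into consecutive blocks of given lengths. -/
def chop {α : Type*} : List α → List ℕ → List (List α)
  | _, [] => []
  | s, a :: L => s.take a :: chop (s.drop a) L

theorem chop_flatten {α : Type*} : ∀ P : List (List α), chop P.flatten (P.map List.length) = P
  | [] => rfl
  | J :: P => by
    simp only [List.flatten_cons, List.map_cons, chop, List.take_left, List.drop_left]
    rw [chop_flatten P]

theorem flatten_chop {α : Type*} :
    ∀ (L : List ℕ) (s : List α), L.sum = s.length → (chop s L).flatten = s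
  | [], s, h => by
    simp only [List.sum_nil] at h
    simp [chop, (List.length_eq_zero_iff.1 h.symm)]
  | a :: L, s, h => by
    simp only [List.sum_cons] at h
    simp only [chop, List.flatten_cons]
    rw [flatten_chop L (s.drop a) (by rw [List.length_drop]; omega), List.take_append_drop]

theorem map_length_chop {α : Type*} :
    ∀ (L : List ℕ) (s : List α), L.sum = s.length → (chop s L).map List.length = L
  | [], s, _ => rfl
  | a :: L, s, h => by
    simp only [List.sum_cons] at h
    simp only [chop, List.map_cons]
    rw [List.length_take, map_length_chop L (s.drop a) (by rw [List.length_drop]; omega)]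
    congr 1
    omega

theorem sublist_of_mem_chop {α : Type*} :
    ∀ (L : List ℕ) (s : List α) (B : List α), B ∈ chop s L → B.Sublist s
  | [], _, _, h => by simp [chop] at h
  | a :: L, s, B, h => by
    rcases List.mem_cons.1 h with rfl | h
    · exact List.take_sublist a s
    · exact (sublist_of_mem_chop L (s.drop a) B h).trans (List.drop_sublist a s)

/-- pull scalars out of a list product. -/
theorem map_smul_prod {A : Type*} [Ring A] [Algebra ℚ A] {α : Type*} (q : α → ℚ) (X : α → A) :
    ∀ L : List α, (L.map fun a => q a • X a).prod = (L.map q).prod • (L.map X).prod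
  | [] => by simp
  | a :: L => by
    simp only [List.map_cons, List.prod_cons, map_smul_prod q X L]
    rw [smul_mul_assoc, mul_smul_comm, smul_smul]

section Vec

variable {l : ℕ}

theorem apply_le_sum {I : List (Fin l → ℕ)} {v : Fin l → ℕ} (h : v ∈ I) (i : Fin l) :
    v i ≤ I.sum i := by
  induction I with
  | nil => simp at h
  | cons u I ih =>
    rw [List.sum_cons, Pi.add_apply]
    rcases List.mem_cons.1 h with rfl | h
    · exact Nat.le_add_right _ _
    · exact le_trans (ih h) (Nat.le_add_left _ _)

theorem one_le_deg {v : Fin l → ℕ} (hv : v ≠ 0) : 1 ≤ ∑ i, v i := by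
  by_contra h
  push_neg at h
  apply hv
  funext i
  exact Finset.sum_eq_zero_iff.1 (by omega) i (Finset.mem_univ i)

theorem sum_ne_zero_of_ne_nil {I : List (Fin l → ℕ)} (hne : I ≠ [])
    (hpos : ∀ v ∈ I, v ≠ 0) : I.sum ≠ 0 := by
  match I with
  | [] => exact absurd rfl hne
  | v :: I =>
    have hv := hpos v (by simp)
    have hex : ∃ i, v i ≠ 0 := by
      by_contra h
      push_neg at h
      exact hv (funext h)
    obtain ⟨i, hi⟩ := hex
    intro h0
    have h1 : (v :: I).sum i = 0 := by rw [h0]; rfl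
    have h2 := apply_le_sum (I := v :: I) (v := v) (by simp) i
    omega

theorem deg_sum (I : List (Fin l → ℕ)) : ∑ i, I.sum i = (I.map fun v => ∑ i, v i).sum := by
  induction I with
  | nil => simp
  | cons v I ih =>
    simp only [List.sum_cons, List.map_cons, Pi.add_apply, Finset.sum_add_distrib, ih]

theorem length_le_mapdeg {I : List (Fin l → ℕ)} (hpos : ∀ v ∈ I, v ≠ 0) :
    I.length ≤ (I.map fun v => ∑ i, v i).sum := by
  induction I with
  | nil => simp
  | cons v I ih =>
    simp only [List.map_cons, List.sum_cons, List.length_cons]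
    have h1 := one_le_deg (hpos v (by simp))
    have h2 := ih fun u hu => hpos u (by simp [hu])
    linarith

theorem vfin (n : Fin l → ℕ) : {I : List (Fin l → ℕ) | IsVComp n I}.Finite := by
  classical
  have hB : (Set.pi Set.univ fun i => Set.Iic (n i)).Finite :=
    Set.Finite.pi fun i => Set.finite_Iic _
  haveI := hB.to_subtype
  apply ((List.finite_length_le ↥(Set.pi Set.univ fun i => Set.Iic (n i))
    (∑ i, n i)).image (List.map Subtype.val)).subset
  rintro I ⟨hpos, hsum⟩
  have hmem : ∀ v ∈ I, ∀ i, v i ≤ n i := by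
    intro v hv i
    rw [← hsum]
    exact apply_le_sum hv i
  have hlen : I.length ≤ ∑ i, n i := by
    calc I.length ≤ (I.map fun v => ∑ i, v i).sum := length_le_mapdeg hpos
      _ = ∑ i, I.sum i := (deg_sum I).symm
      _ = ∑ i, n i := by rw [hsum]
  refine ⟨I.attach.map fun x => ⟨x.1, fun i _ => hmem x.1 x.2 i⟩, ?_, ?_⟩
  · simpa using hlen
  · rw [List.map_map]
    simp

/-- the Finset of vector compositions of `n`. -/
noncomputable def FnV (n : Fin l → ℕ) : Finset (List (Fin l → ℕ)) := (vfin n).toFinset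

theorem mem_FnV {n : Fin l → ℕ} {I : List (Fin l → ℕ)} : I ∈ FnV n ↔ IsVComp n I :=
  Set.Finite.mem_toFinset _

/-- sections: lists picking a composition of each entry. -/
noncomputable def secF : List (Fin l → ℕ) → Finset (List (List (Fin l → ℕ)))
  | [] => {[]}
  | v :: I => ((FnV v) ×ˢ secF I).image fun p => p.1 :: p.2

@[simp] theorem secF_nil : secF ([] : List (Fin l → ℕ)) = {[]} := by rw [secF]

@[simp] theorem secF_cons (v : Fin l → ℕ) (I : List (Fin l → ℕ)) :
    secF (v :: I) = ((FnV v) ×ˢ secF I).image fun p => p.1 :: p.2 := by rw [secF]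

theorem mem_secF : ∀ {I : List (Fin l → ℕ)} {P : List (List (Fin l → ℕ))},
    P ∈ secF I ↔ List.Forall₂ (fun J v => J ∈ FnV v) P I := by
  intro I
  induction I with
  | nil => intro P; simp [List.forall₂_nil_right_iff]
  | cons v I ih =>
    intro P
    simp only [secF_cons, Finset.mem_image, Finset.mem_product, List.forall₂_cons_right_iff]
    constructor
    · rintro ⟨⟨J, P'⟩, ⟨hJ, hP'⟩, rfl⟩
      exact ⟨J, P', hJ, ih.1 hP', rfl⟩
    · rintro ⟨J, P', hJ, hP', rfl⟩
      exact ⟨⟨J, P'⟩, ⟨hJ, ih.2 hP'⟩, rfl⟩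

theorem map_sum_of_forall₂ : ∀ {P : List (List (Fin l → ℕ))} {I : List (Fin l → ℕ)},
    List.Forall₂ (fun J v => J ∈ FnV v) P I → I = P.map List.sum := by
  intro P I h
  induction h with
  | nil => rfl
  | @cons J v P' I' h1 _ ih =>
    simp only [List.map_cons]
    rw [← ih, (mem_FnV.1 h1).2]

theorem forall₂_self_of_mem {P : List (List (Fin l → ℕ))} (h : ∀ J ∈ P, J ∈ FnV J.sum) :
    List.Forall₂ (fun J v => J ∈ FnV v) P (P.map List.sum) := by
  rw [List.forall₂_map_right_iff]
  exact List.forall₂_same.2 h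

theorem prod_secF {A : Type*} [Ring A] [Algebra ℚ A] (g : List (Fin l → ℕ) → A) :
    ∀ I : List (Fin l → ℕ),
      (I.map fun v => ∑ J ∈ FnV v, g J).prod = ∑ P ∈ secF I, (P.map g).prod := by
  intro I
  induction I with
  | nil => simp [secF]
  | cons v I ih =>
    simp only [List.map_cons, List.prod_cons, ih, secF_cons]
    rw [Finset.sum_image (by rintro ⟨J1, P1⟩ - ⟨J2, P2⟩ - h; simpa using h)]
    rw [Finset.sum_product]
    rw [Finset.sum_mul_sum]
    simp only [List.map_cons, List.prod_cons]

end Vec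


theorem fiber_sum {l : ℕ} {n : Fin l → ℕ} {K : List (Fin l → ℕ)} (hK : K ∈ FnV n) :
    ∑ P ∈ (((FnV n).biUnion secF).filter fun P => P.flatten = K),
      ((P.length.factorial : ℚ))⁻¹ *
        (P.map fun J => (-1 : ℚ) ^ (J.length + 1) / (J.length : ℚ)).prod
      = e K.length := by
  classical
  obtain ⟨hKpos, hKsum⟩ := mem_FnV.1 hK
  rw [e]
  refine Finset.sum_nbij' (i := fun P => P.map List.length) (j := fun L => chop K L)
    ?_ ?_ ?_ ?_ ?_
  · intro P hP
    rw [Finset.mem_filter, Finset.mem_biUnion] at hP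
    obtain ⟨⟨I, hI, hsec⟩, hflat⟩ := hP
    have hImap := map_sum_of_forall₂ (mem_secF.1 hsec)
    obtain ⟨hIpos, hIsum⟩ := mem_FnV.1 hI
    rw [mem_comps]
    constructor
    · intro x hx
      obtain ⟨J, hJ, rfl⟩ := List.mem_map.1 hx
      have hJne : J ≠ [] := by
        intro h0
        have hsne : J.sum ≠ 0 := by
          apply hIpos
          rw [hImap]
          exact List.mem_map_of_mem hJ
        exact hsne (by rw [h0]; rfl)
      exact List.length_pos_iff.2 hJne
    · rw [← List.length_flatten, hflat]
  · intro L hL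
    rw [mem_comps] at hL
    obtain ⟨hLpos, hLsum⟩ := hL
    have hflat : (chop K L).flatten = K := flatten_chop L K hLsum
    have hmapl : (chop K L).map List.length = L := map_length_chop L K hLsum
    have hJmem : ∀ J ∈ chop K L, J ∈ FnV J.sum := by
      intro J hJ
      exact mem_FnV.2 ⟨fun v hv => hKpos v ((sublist_of_mem_chop L K J hJ).mem hv), rfl⟩
    have hJne : ∀ J ∈ chop K L, J ≠ [] := by
      intro J hJ h0
      have h1 : J.length ∈ L := by
        rw [← hmapl]
        exact List.mem_map_of_mem hJ
      have h2 := hLpos _ h1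
      rw [h0] at h2
      simp at h2
    rw [Finset.mem_filter, Finset.mem_biUnion]
    refine ⟨⟨(chop K L).map List.sum, ?_, mem_secF.2 (forall₂_self_of_mem hJmem)⟩, hflat⟩
    refine mem_FnV.2 ⟨?_, ?_⟩
    · intro v hv
      obtain ⟨J, hJ, rfl⟩ := List.mem_map.1 hv
      exact sum_ne_zero_of_ne_nil (hJne J hJ)
        fun u hu => hKpos u ((sublist_of_mem_chop L K J hJ).mem hu)
    · rw [← List.sum_flatten, hflat, hKsum]
  · intro P hP
    rw [Finset.mem_filter] at hP
    rw [← hP.2, chop_flatten]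
  · intro L hL
    rw [mem_comps] at hL
    exact map_length_chop L K hL.2
  · intro P hP
    rw [w, List.length_map, List.map_map]
    rfl

end SPhiAux

/-- With `Φ` and `S` related by
`Σ_{n≠0} (Φ_n/|n|) t^n = log(1 + Σ_{n≠0} S_n t^n)` (expressed coefficientwise
as the hypothesis `hlog`), exponentiating gives
`S_n = Σ_{I ⊨ n} (1/sp(I)) Φ^I`, where for `I = (i_1,…,i_m)` one sets
`sp(I) = m! · |i_1|·|i_2|···|i_m|` and `Φ^I = Φ_{i_1}···Φ_{i_m}`. -/

theorem S_in_terms_of_phi {l : ℕ} {A : Type*} [Ring A] [Algebra ℚ A]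
    (S Φ : (Fin l → ℕ) → A)
    (hlog : ∀ n : Fin l → ℕ, n ≠ 0 →
      (((∑ i, n i : ℕ) : ℚ))⁻¹ • Φ n =
        ∑ᶠ I ∈ {I : List (Fin l → ℕ) | IsVComp n I},
          ((-1 : ℚ) ^ (I.length + 1) / (I.length : ℚ)) • (I.map S).prod) :
    ∀ n : Fin l → ℕ, n ≠ 0 →
      S n = ∑ᶠ I ∈ {I : List (Fin l → ℕ) | IsVComp n I},
        ((I.length.factorial : ℚ) *
            (I.map fun v => ((∑ i, v i : ℕ) : ℚ)).prod)⁻¹ • (I.map Φ).prod := by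
  classical
  intro n hn
  have hdegne : ∀ v : Fin l → ℕ, v ≠ 0 → ((∑ i, v i : ℕ) : ℚ) ≠ 0 := by
    intro v hv
    have h1 := SPhiAux.one_le_deg hv
    exact Nat.cast_ne_zero.2 (by omega)
  have hΦ : ∀ v : Fin l → ℕ, v ≠ 0 → Φ v = ((∑ i, v i : ℕ) : ℚ) •
      ∑ J ∈ SPhiAux.FnV v, ((-1 : ℚ) ^ (J.length + 1) / (J.length : ℚ)) • (J.map S).prod := by
    intro v hv
    have h := hlog v hv
    rw [← Set.Finite.coe_toFinset (SPhiAux.vfin v), finsum_mem_coe_finset] at h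
    rw [show ((SPhiAux.vfin v).toFinset : Finset (List (Fin l → ℕ))) = SPhiAux.FnV v from rfl] at h
    rw [← h, smul_smul, mul_inv_cancel₀ (hdegne v hv), one_smul]
  rw [← Set.Finite.coe_toFinset (SPhiAux.vfin n), finsum_mem_coe_finset]
  rw [show ((SPhiAux.vfin n).toFinset : Finset (List (Fin l → ℕ))) = SPhiAux.FnV n from rfl]
  have hdisj : (↑(SPhiAux.FnV n) : Set (List (Fin l → ℕ))).PairwiseDisjoint SPhiAux.secF := by
    intro I1 h1 I2 h2 hne
    rw [Function.onFun_apply, Finset.disjoint_left]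
    intro P hP1 hP2
    exact hne ((SPhiAux.map_sum_of_forall₂ (SPhiAux.mem_secF.1 hP1)).trans
      (SPhiAux.map_sum_of_forall₂ (SPhiAux.mem_secF.1 hP2)).symm)
  have hmaps : ∀ P ∈ (SPhiAux.FnV n).biUnion SPhiAux.secF, P.flatten ∈ SPhiAux.FnV n := by
    intro P hP
    obtain ⟨I, hI, hsec⟩ := Finset.mem_biUnion.1 hP
    have hmap := SPhiAux.map_sum_of_forall₂ (SPhiAux.mem_secF.1 hsec)
    obtain ⟨hIpos, hIsum⟩ := SPhiAux.mem_FnV.1 hI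
    have hfa2 : List.Forall₂ (fun J v => J ∈ SPhiAux.FnV v) P (P.map List.sum) :=
      hmap ▸ SPhiAux.mem_secF.1 hsec
    have hJ : ∀ J ∈ P, J ∈ SPhiAux.FnV J.sum := by
      intro J hJP
      have h3 := (List.forall₂_map_right_iff (f := List.sum)).1 hfa2
      exact List.forall₂_same.1 h3 J hJP
    refine SPhiAux.mem_FnV.2 ⟨?_, ?_⟩
    · intro v hv
      obtain ⟨J, hJP, hvJ⟩ := List.mem_flatten.1 hv
      exact (SPhiAux.mem_FnV.1 (hJ J hJP)).1 v hvJ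
    · rw [List.sum_flatten, ← hmap]
      exact hIsum
  symm
  calc ∑ I ∈ SPhiAux.FnV n,
        ((I.length.factorial : ℚ) * (I.map fun v => ((∑ i, v i : ℕ) : ℚ)).prod)⁻¹ •
          (I.map Φ).prod
      = ∑ I ∈ SPhiAux.FnV n, ((I.length.factorial : ℚ))⁻¹ •
          (I.map fun v => ∑ J ∈ SPhiAux.FnV v,
            ((-1 : ℚ) ^ (J.length + 1) / (J.length : ℚ)) • (J.map S).prod).prod := by
        refine Finset.sum_congr rfl fun I hI => ?_
        obtain ⟨hpos, -⟩ := SPhiAux.mem_FnV.1 hI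
        have hmapI : I.map Φ = I.map fun v => ((∑ i, v i : ℕ) : ℚ) •
            ∑ J ∈ SPhiAux.FnV v, ((-1 : ℚ) ^ (J.length + 1) / (J.length : ℚ)) • (J.map S).prod :=
          List.map_congr_left fun v hv => hΦ v (hpos v hv)
        rw [hmapI, SPhiAux.map_smul_prod, smul_smul]
        have hprodq : (I.map fun v => ((∑ i, v i : ℕ) : ℚ)).prod ≠ 0 := by
          apply List.prod_ne_zero
          intro hmem
          obtain ⟨v, hv, hv0⟩ := List.mem_map.1 hmem
          exact hdegne v (hpos v hv) hv0
        rw [mul_inv, mul_assoc, inv_mul_cancel₀ hprodq, mul_one]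
    _ = ∑ I ∈ SPhiAux.FnV n, ∑ P ∈ SPhiAux.secF I, ((P.length.factorial : ℚ))⁻¹ •
          (P.map fun J =>
            ((-1 : ℚ) ^ (J.length + 1) / (J.length : ℚ)) • (J.map S).prod).prod := by
        refine Finset.sum_congr rfl fun I hI => ?_
        rw [SPhiAux.prod_secF, Finset.smul_sum]
        refine Finset.sum_congr rfl fun P hP => ?_
        rw [(SPhiAux.mem_secF.1 hP).length_eq]
    _ = ∑ P ∈ (SPhiAux.FnV n).biUnion SPhiAux.secF, ((P.length.factorial : ℚ))⁻¹ •
          (P.map fun J =>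
            ((-1 : ℚ) ^ (J.length + 1) / (J.length : ℚ)) • (J.map S).prod).prod :=
        (Finset.sum_biUnion hdisj).symm
    _ = ∑ P ∈ (SPhiAux.FnV n).biUnion SPhiAux.secF,
          (((P.length.factorial : ℚ))⁻¹ *
            (P.map fun J => (-1 : ℚ) ^ (J.length + 1) / (J.length : ℚ)).prod) •
          (P.flatten.map S).prod := by
        refine Finset.sum_congr rfl fun P hP => ?_
        rw [SPhiAux.map_smul_prod (fun J => (-1 : ℚ) ^ (J.length + 1) / (J.length : ℚ))
          (fun J => (J.map S).prod) P, smul_smul]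
        congr 1
        rw [List.map_flatten, List.prod_flatten, List.map_map]
        rfl
    _ = ∑ K ∈ SPhiAux.FnV n,
          ∑ P ∈ ((SPhiAux.FnV n).biUnion SPhiAux.secF).filter fun P => P.flatten = K,
          (((P.length.factorial : ℚ))⁻¹ *
            (P.map fun J => (-1 : ℚ) ^ (J.length + 1) / (J.length : ℚ)).prod) •
          (P.flatten.map S).prod :=
        (Finset.sum_fiberwise_of_maps_to hmaps _).symm
    _ = ∑ K ∈ SPhiAux.FnV n, SPhiAux.e K.length • (K.map S).prod := by
        refine Finset.sum_congr rfl fun K hK => ?_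
        have hcong : ∀ P ∈ ((SPhiAux.FnV n).biUnion SPhiAux.secF).filter
            (fun P => P.flatten = K),
            (((P.length.factorial : ℚ))⁻¹ *
              (P.map fun J => (-1 : ℚ) ^ (J.length + 1) / (J.length : ℚ)).prod) •
            (P.flatten.map S).prod =
            (((P.length.factorial : ℚ))⁻¹ *
              (P.map fun J => (-1 : ℚ) ^ (J.length + 1) / (J.length : ℚ)).prod) •
            (K.map S).prod := by
          intro P hP
          rw [(Finset.mem_filter.1 hP).2]
        rw [Finset.sum_congr rfl hcong, ← Finset.sum_smul, SPhiAux.fiber_sum hK]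
    _ = S n := by
        have h1 : [n] ∈ SPhiAux.FnV n := SPhiAux.mem_FnV.2
          ⟨fun v hv => by rw [List.mem_singleton.1 hv]; exact hn, by simp⟩
        rw [Finset.sum_eq_single_of_mem [n] h1 ?_]
        · simp [SPhiAux.e_one]
        · intro K hK hne
          obtain ⟨hKpos, hKsum⟩ := SPhiAux.mem_FnV.1 hK
          match K with
          | [] => exact absurd hKsum.symm (by simpa using hn)
          | [v] =>
            have hv : v = n := by simpa using hKsum
            exact absurd (by rw [hv]) hne
          | v :: u :: T =>
            rw [SPhiAux.e_eq_zero _ (by simp), zero_smul]
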